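/- For any finite simple graph G on n vertices, Q(G,3) = 3^n, where Q is the two-variable-free interlace polynomial of Aigner and van der Holst. -/

import Mathlib

/-- Local complementation at a vertex `v`: toggle all edges between
distinct neighbours of `v`. -/
def localComp {V : Type} (G : SimpleGraph V) (v : V) : SimpleGraph V where
  Adj x y := x ≠ y ∧ Xor' (G.Adj x y) (G.Adj v x ∧ G.Adj v y)
  symm := ⟨by
    intro x y ⟨hxy, h⟩
    refine ⟨hxy.symm, ?_⟩
    rw [G.adj_comm y x, and_comm]
    exact h⟩
  loopless := ⟨fun x h => h.1 rfl⟩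

/-- Edge local complementation on the edge `{u,v}`: `G*u*v*u`. -/
def elc {V : Type} (G : SimpleGraph V) (u v : V) : SimpleGraph V :=
  localComp (localComp (localComp G u) v) u

/-- Deletion of a vertex `u`: the induced subgraph on the other vertices. -/
def delVert {V : Type} (G : SimpleGraph V) (u : V) :
    SimpleGraph {w : V // w ≠ u} :=
  G.induce {w : V | w ≠ u}

/-- For any graph `G` on `n` vertices, `Q(G,3) = 3^n`, where `Q` is the
interlace polynomial of Aigner and van der Holst, i.e. any function on
finite graphs satisfying `Q(E_n) = x^n` and
`Q(G) = Q(G\u) + Q(G^{(uv)}\u) + Q(G*u\u)` for every edge `{u,v}`. -/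

lemma interlace_aux
    (Q : ∀ (W : Type) [Fintype W] [DecidableEq W], SimpleGraph W → Polynomial ℤ)
    (hbase : ∀ (W : Type) [Fintype W] [DecidableEq W],
      Q W (⊥ : SimpleGraph W) = Polynomial.X ^ (Fintype.card W))
    (hrec : ∀ (W : Type) [Fintype W] [DecidableEq W] (G : SimpleGraph W)
      (u v : W), G.Adj u v →
      Q W G = Q {w : W // w ≠ u} (delVert G u)
        + Q {w : W // w ≠ u} (delVert (elc G u v) u)
        + Q {w : W // w ≠ u} (delVert (localComp G u) u)) :
    ∀ (n : ℕ) (V : Type) [Fintype V] [DecidableEq V] (G : SimpleGraph V),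
      Fintype.card V = n → (Q V G).eval 3 = 3 ^ n := by
  intro n
  induction n using Nat.strong_induction_on with
  | _ n ih =>
    intro V _ _ G hcard
    by_cases h : ∃ u v, G.Adj u v
    · obtain ⟨u, v, huv⟩ := h
      have hpos : 0 < n := by
        rw [← hcard]
        exact Fintype.card_pos_iff.mpr ⟨u⟩
      have hcard' : Fintype.card {w : V // w ≠ u} = n - 1 := by
        have := Fintype.card_subtype_compl (fun w : V => w = u)
        simp only [Fintype.card_subtype_eq] at this
        rw [hcard] at this
        exact this
      rw [hrec V G u v huv]
      simp only [Polynomial.eval_add]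
      rw [ih (n-1) (by omega) _ (delVert G u) hcard',
          ih (n-1) (by omega) _ (delVert (elc G u v) u) hcard',
          ih (n-1) (by omega) _ (delVert (localComp G u) u) hcard']
      have hn : (3:ℤ) ^ n = 3 ^ (n - 1) * 3 := by
        rw [← pow_succ]
        congr 1
        omega
      rw [hn]
      ring
    · have hG : G = ⊥ := by
        ext x y
        simp only [SimpleGraph.bot_adj, iff_false]
        intro hxy
        exact h ⟨x, y, hxy⟩
      subst hG
      rw [hbase]
      simp [hcard]

theorem interlace_Q_eval_three
    (Q : ∀ (W : Type) [Fintype W] [DecidableEq W], SimpleGraph W → Polynomial ℤ)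
    (hbase : ∀ (W : Type) [Fintype W] [DecidableEq W],
      Q W (⊥ : SimpleGraph W) = Polynomial.X ^ (Fintype.card W))
    (hrec : ∀ (W : Type) [Fintype W] [DecidableEq W] (G : SimpleGraph W)
      (u v : W), G.Adj u v →
      Q W G = Q {w : W // w ≠ u} (delVert G u)
        + Q {w : W // w ≠ u} (delVert (elc G u v) u)
        + Q {w : W // w ≠ u} (delVert (localComp G u) u))
    {V : Type} [Fintype V] [DecidableEq V] (G : SimpleGraph V) :
    (Q V G).eval 3 = 3 ^ (Fintype.card V) := by
  exact interlace_aux Q hbase hrec (Fintype.card V) V G rfl
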